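/- arXiv:1805.04916 — 2 statements merged into one kernel-verified Lean document; each statement's English description precedes it below -/
import Mathlib

section
/- Let J be the 2×2 real matrix with rows (0, −1) and (1, 0), let ρ : ℝ → M₂(ℝ) be a map into the 2×2 real matrices, let ψ : ℝ → ℝ² be differentiable with ψ(t) ≠ 0 and ψ'(t) = (J + ρ(t))·ψ(t) for all t, and let θ : ℝ → ℝ be a differentiable function with ψ(t) = ‖ψ(t)‖·(cos θ(t), sin θ(t)) for all t. Then θ'(t) ≥ 1 − ‖ρ(t)‖ for every t, where ‖ρ(t)‖ denotes the operator norm of ρ(t) on Euclidean ℝ². -/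
/-- The standard symplectic rotation matrix `J` with rows `(0, -1)` and `(1, 0)`. -/
noncomputable def Jmat : Matrix (Fin 2) (Fin 2) ℝ := !![0, -1; 1, 0]

lemma clm_coord (A : Matrix (Fin 2) (Fin 2) ℝ) (x : EuclideanSpace ℝ (Fin 2)) (i : Fin 2) :
    Matrix.toEuclideanCLM (𝕜 := ℝ) A x i = A i 0 * x 0 + A i 1 * x 1 := by
  have : Matrix.toEuclideanCLM (𝕜 := ℝ) A x i = Matrix.toLin' A (WithLp.equiv _ _ x) i := rfl
  rw [this]
  simp [Matrix.toLin'_apply, Matrix.mulVec, dotProduct, Fin.sum_univ_two]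

/-- If `ψ : ℝ → ℝ²` is nonvanishing and solves `ψ' = (J + ρ(t)) ψ`,
and `θ` is a differentiable angular function for `ψ`, i.e.
`ψ t = ‖ψ t‖ • (cos (θ t), sin (θ t))`, then `θ' t ≥ 1 − ‖ρ t‖`, where `‖ρ t‖` is
the operator norm of `ρ t` acting on Euclidean `ℝ²`. -/
theorem stmt_14 (ρ : ℝ → Matrix (Fin 2) (Fin 2) ℝ)
    (ψ : ℝ → EuclideanSpace ℝ (Fin 2)) (θ : ℝ → ℝ)
    (hψ_ne : ∀ t : ℝ, ψ t ≠ 0)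
    (hψ : ∀ t : ℝ, HasDerivAt ψ
      ((Matrix.toEuclideanCLM (𝕜 := ℝ) (Jmat + ρ t)) (ψ t)) t)
    (hθ_diff : ∀ t : ℝ, DifferentiableAt ℝ θ t)
    (hθ : ∀ t : ℝ, ψ t 0 = ‖ψ t‖ * Real.cos (θ t) ∧
      ψ t 1 = ‖ψ t‖ * Real.sin (θ t)) :
    ∀ t : ℝ, 1 - ‖Matrix.toEuclideanCLM (𝕜 := ℝ) (ρ t)‖ ≤ deriv θ t := by
  intro t
  set W : EuclideanSpace ℝ (Fin 2) := (Matrix.toEuclideanCLM (𝕜 := ℝ) (Jmat + ρ t)) (ψ t) with hW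
  set P : EuclideanSpace ℝ (Fin 2) := (Matrix.toEuclideanCLM (𝕜 := ℝ) (ρ t)) (ψ t) with hP
  have hrpos : 0 < ‖ψ t‖ := norm_pos_iff.2 (hψ_ne t)
  -- differentiability of the norm
  have hr_diff : DifferentiableAt ℝ (fun s => ‖ψ s‖) t :=
    (hψ t).differentiableAt.norm ℝ (hψ_ne t)
  set rd : ℝ := deriv (fun s => ‖ψ s‖) t with hrd_def
  have hrd : HasDerivAt (fun s => ‖ψ s‖) rd t := hr_diff.hasDerivAt
  set θd : ℝ := deriv θ t with hθd_def
  have hθd : HasDerivAt θ θd t := (hθ_diff t).hasDerivAt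
  -- coordinate derivatives from the ODE
  have hX : HasDerivAt (fun s => ψ s 0) (W 0) t := by
    exact (EuclideanSpace.proj (0 : Fin 2) (𝕜 := ℝ)).hasFDerivAt.comp_hasDerivAt t (hψ t)
  have hY : HasDerivAt (fun s => ψ s 1) (W 1) t := by
    exact (EuclideanSpace.proj (1 : Fin 2) (𝕜 := ℝ)).hasFDerivAt.comp_hasDerivAt t (hψ t)
  -- coordinate derivatives from the polar representation
  have hx_eq : (fun s => ψ s 0) = fun s => ‖ψ s‖ * Real.cos (θ s) := funext fun s => (hθ s).1
  have hy_eq : (fun s => ψ s 1) = fun s => ‖ψ s‖ * Real.sin (θ s) := funext fun s => (hθ s).2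
  have hcos : HasDerivAt (fun s => Real.cos (θ s)) (-Real.sin (θ t) * θd) t :=
    (Real.hasDerivAt_cos (θ t)).comp t hθd
  have hsin : HasDerivAt (fun s => Real.sin (θ s)) (Real.cos (θ t) * θd) t :=
    (Real.hasDerivAt_sin (θ t)).comp t hθd
  have hX2 : HasDerivAt (fun s => ψ s 0)
      (rd * Real.cos (θ t) + ‖ψ t‖ * (-Real.sin (θ t) * θd)) t := by
    rw [hx_eq]; exact hrd.mul hcos
  have hY2 : HasDerivAt (fun s => ψ s 1)
      (rd * Real.sin (θ t) + ‖ψ t‖ * (Real.cos (θ t) * θd)) t := by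
    rw [hy_eq]; exact hrd.mul hsin
  have hW0 : W 0 = rd * Real.cos (θ t) + ‖ψ t‖ * (-Real.sin (θ t) * θd) := hX.unique hX2
  have hW1 : W 1 = rd * Real.sin (θ t) + ‖ψ t‖ * (Real.cos (θ t) * θd) := hY.unique hY2
  -- split W into the J part and the ρ part
  have hadd : W = (Matrix.toEuclideanCLM (𝕜 := ℝ) Jmat) (ψ t) + P := by
    rw [hW, hP, map_add]; rfl
  have hJ0 : (Matrix.toEuclideanCLM (𝕜 := ℝ) Jmat) (ψ t) 0 = -(ψ t 1) := by
    rw [clm_coord]; simp [Jmat]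
  have hJ1 : (Matrix.toEuclideanCLM (𝕜 := ℝ) Jmat) (ψ t) 1 = ψ t 0 := by
    rw [clm_coord]; simp [Jmat]
  have hW0' : W 0 = -(ψ t 1) + P 0 := by rw [hadd]; simp [hJ0]
  have hW1' : W 1 = ψ t 0 + P 1 := by rw [hadd]; simp [hJ1]
  -- Cauchy–Schwarz bound on the cross term
  set u : EuclideanSpace ℝ (Fin 2) := (WithLp.equiv 2 _).symm ![-(ψ t 1), ψ t 0] with hu
  have hu0 : u 0 = -(ψ t 1) := rfl
  have hu1 : u 1 = ψ t 0 := rfl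
  have hinner : inner ℝ u P = -(ψ t 1) * P 0 + ψ t 0 * P 1 := by
    simp [EuclideanSpace.inner_eq_star_dotProduct, hu, Matrix.vecHead, Matrix.vecTail]
    ring
  have hnormsq : ψ t 0 ^ 2 + ψ t 1 ^ 2 = ‖ψ t‖ ^ 2 := by
    have hc := (hθ t).1
    have hs := (hθ t).2
    have : Real.cos (θ t) ^ 2 + Real.sin (θ t) ^ 2 = 1 := by
      rw [add_comm]; exact Real.sin_sq_add_cos_sq (θ t)
    rw [hc, hs]; nlinarith
  have hunorm : ‖u‖ = ‖ψ t‖ := by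
    have h1 : ‖u‖ = Real.sqrt (u 0 ^ 2 + u 1 ^ 2) := by
      rw [EuclideanSpace.norm_eq]; simp [Fin.sum_univ_two]
    have h2 : ‖ψ t‖ = Real.sqrt (‖ψ t‖ ^ 2) := by
      rw [Real.sqrt_sq hrpos.le]
    rw [h1, hu0, hu1, h2]
    congr 1
    linear_combination hnormsq
  have hPnorm : ‖P‖ ≤ ‖Matrix.toEuclideanCLM (𝕜 := ℝ) (ρ t)‖ * ‖ψ t‖ :=
    (Matrix.toEuclideanCLM (𝕜 := ℝ) (ρ t)).le_opNorm (ψ t)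
  have hCS : |(inner ℝ u P : ℝ)| ≤ ‖u‖ * ‖P‖ := abs_real_inner_le_norm u P
  have hcross : -(‖Matrix.toEuclideanCLM (𝕜 := ℝ) (ρ t)‖ * ‖ψ t‖ ^ 2) ≤
      -(ψ t 1) * P 0 + ψ t 0 * P 1 := by
    have h1 : ‖u‖ * ‖P‖ ≤ ‖ψ t‖ * (‖Matrix.toEuclideanCLM (𝕜 := ℝ) (ρ t)‖ * ‖ψ t‖) := by
      rw [hunorm]
      exact mul_le_mul_of_nonneg_left hPnorm hrpos.le
    have h3 := (abs_le.1 hCS).1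
    rw [hinner] at h3
    have h2 : ‖ψ t‖ * (‖Matrix.toEuclideanCLM (𝕜 := ℝ) (ρ t)‖ * ‖ψ t‖) =
        ‖Matrix.toEuclideanCLM (𝕜 := ℝ) (ρ t)‖ * ‖ψ t‖ ^ 2 := by ring
    linarith
  -- key identity: x * W1 - y * W0 = r^2 * θd
  have hkey : ψ t 0 * W 1 - ψ t 1 * W 0 = ‖ψ t‖ ^ 2 * θd := by
    rw [hW0, hW1, (hθ t).1, (hθ t).2]
    have : Real.cos (θ t) ^ 2 + Real.sin (θ t) ^ 2 = 1 := by
      rw [add_comm]; exact Real.sin_sq_add_cos_sq (θ t)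
    linear_combination (‖ψ t‖ ^ 2 * θd) * this
  -- also: x * W1 - y * W0 = r^2 + cross term
  have hkey2 : ψ t 0 * W 1 - ψ t 1 * W 0 =
      ‖ψ t‖ ^ 2 + (-(ψ t 1) * P 0 + ψ t 0 * P 1) := by
    rw [hW0', hW1']
    linear_combination hnormsq
  have hfinal : ‖ψ t‖ ^ 2 * (1 - ‖Matrix.toEuclideanCLM (𝕜 := ℝ) (ρ t)‖) ≤ ‖ψ t‖ ^ 2 * θd := by
    rw [← hkey, hkey2]
    have h4 : ‖ψ t‖ ^ 2 * (1 - ‖Matrix.toEuclideanCLM (𝕜 := ℝ) (ρ t)‖) =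
        ‖ψ t‖ ^ 2 - ‖Matrix.toEuclideanCLM (𝕜 := ℝ) (ρ t)‖ * ‖ψ t‖ ^ 2 := by ring
    linarith
  have hr2 : (0:ℝ) < ‖ψ t‖ ^ 2 := by positivity
  exact le_of_mul_le_mul_left hfinal hr2
end

section
/- Let ℍ denote the real quaternions with units i, j, k, conjugation a ↦ conj(a), real part Re, and inner product ⟨a, b⟩ := Re(a·conj(b)). Then for every unit quaternion U (i.e., |U| = 1) and every W ∈ ℍ, the identity ⟨ conj(U)·j·W − conj(U)·W·conj(U)·j·U , conj(U)·k·U ⟩ = −2·⟨ i·U, W ⟩ holds. -/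
open Quaternion RealInnerProductSpace

/-- The quaternion unit `i`. -/
noncomputable def qI : ℍ[ℝ] := ⟨0, 1, 0, 0⟩

/-- The quaternion unit `j`. -/
noncomputable def qJ : ℍ[ℝ] := ⟨0, 0, 1, 0⟩

/-- The quaternion unit `k`. -/
noncomputable def qK : ℍ[ℝ] := ⟨0, 0, 0, 1⟩

/-- For every unit quaternion `U` and every `W ∈ ℍ`,
`⟨ conj U * j * W − conj U * W * (conj U * j * U), conj U * k * U ⟩ = −2 ⟨ i * U, W ⟩`,
where `⟨a, b⟩ = Re (a * conj b)` is the real inner product on the quaternions and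
conjugation is `star`. -/
theorem stmt_15 (U W : ℍ[ℝ]) (hU : ‖U‖ = 1) :
    ⟪star U * qJ * W - star U * W * (star U * qJ * U), star U * qK * U⟫ =
      -2 * ⟪qI * U, W⟫ := by
  have h : U.re ^ 2 + U.imI ^ 2 + U.imJ ^ 2 + U.imK ^ 2 = 1 := by
    have h1 : normSq U = 1 := by
      rw [Quaternion.normSq_eq_norm_mul_self, hU]; norm_num
    rw [Quaternion.normSq_def'] at h1
    linarith [h1]
  simp only [Quaternion.inner_def, Quaternion.re_mul, Quaternion.imI_mul,
    Quaternion.imJ_mul, Quaternion.imK_mul, Quaternion.re_star, Quaternion.imI_star,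
    Quaternion.imJ_star, Quaternion.imK_star, Quaternion.re_sub, Quaternion.imI_sub,
    Quaternion.imJ_sub, Quaternion.imK_sub]
  simp only [qI, qJ, qK]
  set_option maxRecDepth 10000 in
  linear_combination ((U.re ^ 2 + U.imI ^ 2 + U.imJ ^ 2 + U.imK ^ 2 + 2) *
    (U.imI * W.re - U.re * W.imI + U.imK * W.imJ - U.imJ * W.imK)) * h
end
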